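/- Let G be a finite simple graph with maximum degree Δ. If q ≥ Δ + 1 is an integer, then any two proper q-colorings of G are Kempe equivalent. Moreover, if G is connected and contains a vertex of degree strictly less than Δ, then any two proper Δ-colorings of G are Kempe equivalent. -/

import Mathlib

/-- A proper `q`-coloring of a simple graph. -/
def IsProperColoring {V : Type*} (G : SimpleGraph V) {q : ℕ} (f : V → Fin q) : Prop :=
  ∀ ⦃u v : V⦄, G.Adj u v → f u ≠ f v

open Classical in
/-- A single Kempe change: interchange two colors `a ≠ b` on one connected
component of the subgraph induced on the vertices colored `a` or `b`. -/
def KempeStep {V : Type*} (G : SimpleGraph V) {q : ℕ} (f g : V → Fin q) : Prop :=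
  ∃ a b : Fin q, a ≠ b ∧
    ∃ C : (G.induce {v | f v = a ∨ f v = b}).ConnectedComponent,
      ∀ v : V,
        g v = if h : f v = a ∨ f v = b then
                if (G.induce {v | f v = a ∨ f v = b}).connectedComponentMk ⟨v, h⟩ = C
                then Equiv.swap a b (f v) else f v
              else f v

/-- Kempe equivalence: one coloring is obtained from the other by a finite
sequence of Kempe changes. -/
def KempeEquiv {V : Type*} (G : SimpleGraph V) {q : ℕ} (f g : V → Fin q) : Prop :=
  Relation.ReflTransGen (KempeStep G) f g

namespace KempeAux

open SimpleGraph

variable {V : Type*} {q : ℕ}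

open Classical in
/-- The result of a Kempe change, as an explicit function. -/
noncomputable def kFun (G : SimpleGraph V) (f : V → Fin q) (a b : Fin q)
    (C : (G.induce {v | f v = a ∨ f v = b}).ConnectedComponent) : V → Fin q := fun v =>
  if h : f v = a ∨ f v = b then
    if (G.induce {v | f v = a ∨ f v = b}).connectedComponentMk ⟨v, h⟩ = C
    then Equiv.swap a b (f v) else f v
  else f v

lemma kempeStep_kFun (G : SimpleGraph V) (f : V → Fin q) {a b : Fin q} (hab : a ≠ b)
    (C : (G.induce {v | f v = a ∨ f v = b}).ConnectedComponent) :
    KempeStep G f (kFun G f a b C) :=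
  ⟨a, b, hab, C, fun _ => rfl⟩

lemma kFun_pos {G : SimpleGraph V} {f : V → Fin q} {a b : Fin q}
    {C : (G.induce {v | f v = a ∨ f v = b}).ConnectedComponent} {v : V}
    (hv : f v = a ∨ f v = b)
    (hC : (G.induce {v | f v = a ∨ f v = b}).connectedComponentMk ⟨v, hv⟩ = C) :
    kFun G f a b C v = Equiv.swap a b (f v) := by
  unfold kFun
  rw [dif_pos hv, if_pos hC]

lemma kFun_neg {G : SimpleGraph V} {f : V → Fin q} {a b : Fin q}
    {C : (G.induce {v | f v = a ∨ f v = b}).ConnectedComponent} {v : V}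
    (hv : f v = a ∨ f v = b)
    (hC : (G.induce {v | f v = a ∨ f v = b}).connectedComponentMk ⟨v, hv⟩ ≠ C) :
    kFun G f a b C v = f v := by
  unfold kFun
  rw [dif_pos hv, if_neg hC]

lemma kFun_not {G : SimpleGraph V} {f : V → Fin q} {a b : Fin q}
    {C : (G.induce {v | f v = a ∨ f v = b}).ConnectedComponent} {v : V}
    (hv : ¬(f v = a ∨ f v = b)) :
    kFun G f a b C v = f v := by
  unfold kFun
  rw [dif_neg hv]

lemma swap_mem {a b x : Fin q} (hx : x = a ∨ x = b) :
    Equiv.swap a b x = a ∨ Equiv.swap a b x = b := by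
  rcases hx with rfl | rfl
  · rw [Equiv.swap_apply_left]; exact Or.inr rfl
  · rw [Equiv.swap_apply_right]; exact Or.inl rfl

lemma kempeStep_proper {G : SimpleGraph V} {f g : V → Fin q}
    (hf : IsProperColoring G f) (h : KempeStep G f g) : IsProperColoring G g := by
  obtain ⟨a, b, hab, C, hg⟩ := h
  intro u u' hadj heq
  have hg_u := hg u
  have hg_u' := hg u'
  by_cases hu : f u = a ∨ f u = b <;> by_cases hu' : f u' = a ∨ f u' = b
  · rw [dif_pos hu] at hg_u
    rw [dif_pos hu'] at hg_u'
    have hadj' : (G.induce {v | f v = a ∨ f v = b}).Adj ⟨u, hu⟩ ⟨u', hu'⟩ := by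
      simpa using hadj
    have hcomp := SimpleGraph.ConnectedComponent.connectedComponentMk_eq_of_adj hadj'
    by_cases hC : (G.induce {v | f v = a ∨ f v = b}).connectedComponentMk ⟨u, hu⟩ = C
    · rw [if_pos hC] at hg_u
      rw [if_pos (hcomp ▸ hC)] at hg_u'
      rw [hg_u, hg_u'] at heq
      exact hf hadj (Equiv.injective _ heq)
    · rw [if_neg hC] at hg_u
      rw [if_neg (hcomp ▸ hC)] at hg_u'
      rw [hg_u, hg_u'] at heq
      exact hf hadj heq
  · rw [dif_pos hu] at hg_u
    rw [dif_neg hu'] at hg_u'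
    have h1 : g u = a ∨ g u = b := by
      rw [hg_u]
      split
      · exact swap_mem hu
      · exact hu
    rw [heq, hg_u'] at h1
    exact hu' h1
  · rw [dif_neg hu] at hg_u
    rw [dif_pos hu'] at hg_u'
    have h1 : g u' = a ∨ g u' = b := by
      rw [hg_u']
      split
      · exact swap_mem hu'
      · exact hu'
    rw [← heq, hg_u] at h1
    exact hu h1
  · rw [dif_neg hu] at hg_u
    rw [dif_neg hu'] at hg_u'
    rw [hg_u, hg_u'] at heq
    exact hf hadj heq

def RIn (G : SimpleGraph V) (S : Set V) : V → V → Prop :=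
  Relation.ReflTransGen (fun x y => x ∈ S ∧ y ∈ S ∧ G.Adj x y)

lemma RIn.mono {G : SimpleGraph V} {S T : Set V} (hST : S ⊆ T) {x y : V} (h : RIn G S x y) :
    RIn G T x y :=
  by
  unfold RIn at h ⊢
  induction h with
  | refl => exact Relation.ReflTransGen.refl
  | tail _ hs ih => exact ih.tail ⟨hST hs.1, hST hs.2.1, hs.2.2⟩

lemma rIn_of_reachable {G : SimpleGraph V} {S : Set V} {x y : ↥S}
    (h : (G.induce S).Reachable x y) : RIn G S ↑x ↑y := by
  obtain ⟨p⟩ := h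
  induction p with
  | nil => exact Relation.ReflTransGen.refl
  | cons ha p ih =>
      exact Relation.ReflTransGen.head ⟨Subtype.mem _, Subtype.mem _, by simpa using ha⟩ ih

lemma reachable_of_rIn {G : SimpleGraph V} {S : Set V} {x y : V}
    (h : RIn G S x y) (hx : x ∈ S) :
    ∃ hy : y ∈ S, (G.induce S).Reachable ⟨x, hx⟩ ⟨y, hy⟩ := by
  induction h with
  | refl => exact ⟨hx, Reachable.refl _⟩
  | tail hR hstep ih =>
      obtain ⟨hb, hreach⟩ := ih
      exact ⟨hstep.2.1,
        hreach.trans (SimpleGraph.Adj.reachable (by simpa using hstep.2.2))⟩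

lemma eq_of_reachable_isolated {W : Type*} {A : SimpleGraph W} {v u : W}
    (hiso : ∀ z, ¬ A.Adj v z) (h : A.Reachable v u) : v = u := by
  obtain ⟨p⟩ := h
  cases p with
  | nil => rfl
  | cons ha _ => exact absurd ha (hiso _)

lemma skip_aux {G : SimpleGraph V} {S : Set V} {v : V}
    (hone : v ∈ S → ∀ u₁ u₂, u₁ ∈ S → u₂ ∈ S → G.Adj v u₁ → G.Adj v u₂ → u₁ = u₂) :
    ∀ (n : ℕ) (x y : ↥S) (p : (G.induce S).Walk x y), p.length ≤ n →
      ↑x ≠ v → ↑y ≠ v → RIn G (S \ {v}) ↑x ↑y := by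
  intro n
  induction n with
  | zero =>
      intro x y p hlen hx hy
      cases p with
      | nil => exact Relation.ReflTransGen.refl
      | cons _ _ => simp at hlen
  | succ n ih =>
      intro x y p hlen hx hy
      cases p with
      | nil => exact Relation.ReflTransGen.refl
      | @cons _ z _ ha p' =>
          by_cases hz : (z : V) = v
          · cases p' with
            | nil => exact absurd hz hy
            | @cons _ z2 _ ha2 p'' =>
                have hxv : G.Adj v ↑x := by
                  have : G.Adj (x : V) (z : V) := by simpa using ha
                  rw [hz] at this
                  exact this.symm
                have hz2v : G.Adj v ↑z2 := by
                  have : G.Adj (z : V) (z2 : V) := by simpa using ha2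
                  rwa [hz] at this
                have hxx : (x : V) = ↑z2 :=
                  hone (hz ▸ z.2) ↑x ↑z2 x.2 z2.2 hxv hz2v
                have hz2ne : (z2 : V) ≠ v := fun hh => G.loopless.irrefl v (hh ▸ hz2v)
                have hlen' : p''.length ≤ n := by
                  simp [SimpleGraph.Walk.length_cons] at hlen
                  omega
                have := ih z2 y p'' hlen' hz2ne hy
                rw [hxx]
                exact this
          · have hlen' : p'.length ≤ n := by
              simp [SimpleGraph.Walk.length_cons] at hlen
              omega
            exact Relation.ReflTransGen.head
              ⟨⟨x.2, hx⟩, ⟨z.2, hz⟩, by simpa using ha⟩ (ih z y p' hlen' hz hy)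

lemma rIn_delete {G : SimpleGraph V} {S : Set V} {v : V}
    (hone : v ∈ S → ∀ u₁ u₂, u₁ ∈ S → u₂ ∈ S → G.Adj v u₁ → G.Adj v u₂ → u₁ = u₂)
    {x y : V} (hx : x ≠ v) (hy : y ≠ v) (h : RIn G S x y) :
    RIn G (S \ {v}) x y := by
  rcases (Relation.ReflTransGen.cases_head h) with rfl | ⟨z, hstep, _⟩
  · exact Relation.ReflTransGen.refl
  · have hxS : x ∈ S := hstep.1
    obtain ⟨hyS, hreach⟩ := reachable_of_rIn h hxS
    obtain ⟨p⟩ := hreach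
    exact skip_aux hone p.length ⟨x, hxS⟩ ⟨y, hyS⟩ p le_rfl hx hy

lemma rIn_val (G : SimpleGraph V) (v : V) {T : Set V} (hT : v ∉ T)
    {S' : Set ↥{u : V | u ≠ v}} (hS : ∀ x : ↥{u : V | u ≠ v}, x ∈ S' ↔ ↑x ∈ T)
    {x y : ↥{u : V | u ≠ v}} :
    RIn (G.induce {u : V | u ≠ v}) S' x y ↔ RIn G T ↑x ↑y := by
  constructor
  · intro hR
    induction hR with
    | refl => exact Relation.ReflTransGen.refl
    | tail hab' hbc ih =>
        exact ih.tail ⟨(hS _).1 hbc.1, (hS _).1 hbc.2.1, by simpa using hbc.2.2⟩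
  · intro hR
    have main : ∀ (y' : V), RIn G T ↑x y' →
        ∀ hy' : y' ≠ v, RIn (G.induce {u : V | u ≠ v}) S' x ⟨y', hy'⟩ := by
      intro y' hR'
      induction hR' with
      | refl =>
          intro hy'
          have : (⟨(x : V), hy'⟩ : ↥{u : V | u ≠ v}) = x := Subtype.ext rfl
          rw [this]
          exact Relation.ReflTransGen.refl
      | @tail b c hab' hbc ih =>
          intro hc
          have hbne : b ≠ v := fun hh => hT (hh ▸ hbc.1)
          exact (ih hbne).tail
            ⟨(hS ⟨b, hbne⟩).2 hbc.1, (hS ⟨c, hc⟩).2 hbc.2.1, by simpa using hbc.2.2⟩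
    exact main _ hR y.2


lemma kempeStep_update [DecidableEq V] {G : SimpleGraph V} {H : V → Fin q} (hH : IsProperColoring G H)
    {v : V} {c : Fin q} (hvc : H v ≠ c) (hc : ∀ u, G.Adj v u → H u ≠ c) :
    KempeStep G H (Function.update H v c) := by
  have hvmem : H v = H v ∨ H v = c := Or.inl rfl
  refine ⟨H v, c, hvc,
    (G.induce {u | H u = H v ∨ H u = c}).connectedComponentMk ⟨v, hvmem⟩, ?_⟩
  intro u
  by_cases hu : u = v
  · subst hu
    rw [Function.update_self, dif_pos hvmem, if_pos rfl, Equiv.swap_apply_left]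
  · rw [Function.update_of_ne hu]
    by_cases huS : H u = H v ∨ H u = c
    · rw [dif_pos huS, if_neg ?_]
      intro hCeq
      have hreach : (G.induce {u | H u = H v ∨ H u = c}).Reachable ⟨u, huS⟩ ⟨v, hvmem⟩ :=
        SimpleGraph.ConnectedComponent.exact hCeq
      have hiso : ∀ z, ¬ (G.induce {u | H u = H v ∨ H u = c}).Adj ⟨v, hvmem⟩ z := by
        intro z hz
        have hadj : G.Adj v ↑z := by simpa using hz
        rcases z.2 with h' | h'
        · exact (hH hadj) h'.symm
        · exact hc ↑z hadj h'
      have := eq_of_reachable_isolated hiso hreach.symm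
      exact hu (congrArg Subtype.val this).symm
    · rw [dif_neg huS]

lemma kempeEquiv_of_eq_off {G : SimpleGraph V} {H g : V → Fin q}
    (hH : IsProperColoring G H) (hg : IsProperColoring G g) (v : V)
    (hagree : ∀ u, u ≠ v → H u = g u) : KempeEquiv G H g := by
  by_cases hvv : H v = g v
  · have : H = g := funext fun u => by
      by_cases h : u = v
      · rw [h]; exact hvv
      · exact hagree u h
    rw [this]
    exact Relation.ReflTransGen.refl
  · have hvmem : H v = H v ∨ H v = g v := Or.inl rfl
    refine Relation.ReflTransGen.single ⟨H v, g v, hvv,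
      (G.induce {u | H u = H v ∨ H u = g v}).connectedComponentMk ⟨v, hvmem⟩, ?_⟩
    intro u
    by_cases hu : u = v
    · subst hu
      rw [dif_pos hvmem, if_pos rfl, Equiv.swap_apply_left]
    · by_cases huS : H u = H v ∨ H u = g v
      · rw [dif_pos huS, if_neg ?_]
        · exact (hagree u hu).symm
        intro hCeq
        have hreach : (G.induce {u | H u = H v ∨ H u = g v}).Reachable ⟨u, huS⟩ ⟨v, hvmem⟩ :=
          SimpleGraph.ConnectedComponent.exact hCeq
        have hiso : ∀ z, ¬ (G.induce {u | H u = H v ∨ H u = g v}).Adj ⟨v, hvmem⟩ z := by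
          intro z hz
          have hadj : G.Adj v ↑z := by simpa using hz
          have hzv : (z : V) ≠ v := by
            intro hh
            rw [hh] at hadj
            exact G.loopless.irrefl v hadj
          rcases z.2 with h' | h'
          · exact (hH hadj) h'.symm
          · exact (hg hadj) ((hagree ↑z hzv).symm.trans h' : g ↑z = g v).symm
        have := eq_of_reachable_isolated hiso hreach.symm
        exact hu (congrArg Subtype.val this).symm
      · rw [dif_neg huS]
        exact (hagree u hu).symm


lemma direct_lift (G : SimpleGraph V) (v : V) {a b : Fin q} (hab : a ≠ b)
    {h h' : ↥{u : V | u ≠ v} → Fin q}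
    {C : ((G.induce {u : V | u ≠ v}).induce {x | h x = a ∨ h x = b}).ConnectedComponent}
    (hform : ∀ x, h' x = kFun (G.induce {u : V | u ≠ v}) h a b C x)
    {H : V → Fin q} (hH : IsProperColoring G H)
    (hres : ∀ x : ↥{u : V | u ≠ v}, H ↑x = h x)
    (hone : (H v = a ∨ H v = b) → ∀ u₁ u₂ : V, (H u₁ = a ∨ H u₁ = b) →
      (H u₂ = a ∨ H u₂ = b) → G.Adj v u₁ → G.Adj v u₂ → u₁ = u₂) :
    ∃ H' : V → Fin q, IsProperColoring G H' ∧ KempeStep G H H' ∧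
      ∀ x : ↥{u : V | u ≠ v}, H' ↑x = h' x := by
  classical
  let φ : ((G.induce {u : V | u ≠ v}).induce {x | h x = a ∨ h x = b}) →g
      (G.induce {u : V | H u = a ∨ H u = b}) :=
    { toFun := fun z => ⟨((z : ↥{u : V | u ≠ v}) : V), by
        have hz := z.2
        rw [Set.mem_setOf_eq, ← hres] at hz
        exact hz⟩
      map_rel' := fun hxy => by simpa using hxy }
  obtain ⟨x₀, hx₀⟩ : ∃ x₀, ((G.induce {u : V | u ≠ v}).induce
      {x | h x = a ∨ h x = b}).connectedComponentMk x₀ = C := C.exists_rep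
  subst hx₀
  refine ⟨kFun G H a b ((((G.induce {u : V | u ≠ v}).induce
      {x | h x = a ∨ h x = b}).connectedComponentMk x₀).map φ),
    kempeStep_proper hH (kempeStep_kFun G H hab _), kempeStep_kFun G H hab _, ?_⟩
  intro x
  have hxne : (x : V) ≠ v := x.2
  by_cases hx : h x = a ∨ h x = b
  · have hxS : H ↑x = a ∨ H ↑x = b := by rw [hres x]; exact hx
    have hx₀S : H ↑↑x₀ = a ∨ H ↑↑x₀ = b := by
      have hz := x₀.2
      rw [Set.mem_setOf_eq, ← hres] at hz
      exact hz
    have hx₀ne : ((x₀ : ↥{u : V | u ≠ v}) : V) ≠ v := (x₀ : ↥{u : V | u ≠ v}).2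
    have hSmem : ∀ z : ↥{u : V | u ≠ v},
        (z ∈ {x | h x = a ∨ h x = b}) ↔ ((z : V) ∈ {u | H u = a ∨ H u = b} \ {v}) := by
      intro z
      constructor
      · intro hz
        rw [Set.mem_setOf_eq, ← hres] at hz
        exact ⟨hz, z.2⟩
      · intro hz
        have h2z := hz.1
        rw [Set.mem_setOf_eq] at h2z
        show h z = a ∨ h z = b
        rw [← hres z]
        exact h2z
    have hiff : ((G.induce {u : V | H u = a ∨ H u = b}).connectedComponentMk ⟨↑x, hxS⟩ =
          (G.induce {u : V | H u = a ∨ H u = b}).connectedComponentMk ⟨↑↑x₀, hx₀S⟩) ↔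
        (((G.induce {u : V | u ≠ v}).induce {x | h x = a ∨ h x = b}).connectedComponentMk
            ⟨x, hx⟩ =
          ((G.induce {u : V | u ≠ v}).induce {x | h x = a ∨ h x = b}).connectedComponentMk
            x₀) := by
      rw [SimpleGraph.ConnectedComponent.eq, SimpleGraph.ConnectedComponent.eq]
      constructor
      · intro hreach
        have h1 : RIn G {u | H u = a ∨ H u = b} ↑x ↑↑x₀ := rIn_of_reachable hreach
        have hone' : v ∈ {u : V | H u = a ∨ H u = b} → ∀ u₁ u₂ : V,
            u₁ ∈ {u : V | H u = a ∨ H u = b} → u₂ ∈ {u : V | H u = a ∨ H u = b} →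
            G.Adj v u₁ → G.Adj v u₂ → u₁ = u₂ := hone
        have h2 : RIn G ({u | H u = a ∨ H u = b} \ {v}) ↑x ↑↑x₀ :=
          rIn_delete hone' hxne hx₀ne h1
        have h3 : RIn (G.induce {u : V | u ≠ v}) {x | h x = a ∨ h x = b} x ↑x₀ :=
          (rIn_val G v (fun hc => hc.2 rfl) hSmem).2 h2
        obtain ⟨hy, hr⟩ := reachable_of_rIn h3 hx
        have he : (⟨↑x₀, hy⟩ : ↥{x | h x = a ∨ h x = b}) = x₀ := Subtype.ext rfl
        exact he ▸ hr
      · intro hreach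
        have h1 : RIn (G.induce {u : V | u ≠ v}) {x | h x = a ∨ h x = b}
            ↑(⟨x, hx⟩ : ↥{x | h x = a ∨ h x = b}) ↑x₀ := rIn_of_reachable hreach
        have h2 : RIn G ({u | H u = a ∨ H u = b} \ {v}) ↑x ↑↑x₀ :=
          (rIn_val G v (fun hc => hc.2 rfl) hSmem).1 h1
        have h3 : RIn G {u | H u = a ∨ H u = b} ↑x ↑↑x₀ := h2.mono Set.diff_subset
        obtain ⟨hy, hr⟩ := reachable_of_rIn h3 hxS
        exact hr
    rw [hform x]
    by_cases hC : ((G.induce {u : V | u ≠ v}).induce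
          {x | h x = a ∨ h x = b}).connectedComponentMk ⟨x, hx⟩ =
        ((G.induce {u : V | u ≠ v}).induce {x | h x = a ∨ h x = b}).connectedComponentMk x₀
    · have hC2 : (G.induce {u : V | H u = a ∨ H u = b}).connectedComponentMk ⟨↑x, hxS⟩ =
          ((((G.induce {u : V | u ≠ v}).induce
            {x | h x = a ∨ h x = b}).connectedComponentMk x₀).map φ) := by
        rw [SimpleGraph.ConnectedComponent.map_mk]
        exact hiff.2 hC
      rw [kFun_pos hx hC, kFun_pos hxS hC2, hres x]
    · have hC2 : (G.induce {u : V | H u = a ∨ H u = b}).connectedComponentMk ⟨↑x, hxS⟩ ≠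
          ((((G.induce {u : V | u ≠ v}).induce
            {x | h x = a ∨ h x = b}).connectedComponentMk x₀).map φ) := by
        rw [SimpleGraph.ConnectedComponent.map_mk]
        exact fun hcc => hC (hiff.1 hcc)
      rw [kFun_neg hx hC, kFun_neg hxS hC2]
      exact hres x
  · have hxS : ¬(H ↑x = a ∨ H ↑x = b) := by rw [hres x]; exact hx
    rw [hform x, kFun_not hx, kFun_not hxS]
    exact hres x


lemma lift_step [Fintype V] [DecidableEq V] (G : SimpleGraph V) (v : V)
    (hdeg : ({x | G.Adj v x} : Set V).ncard < q)
    {h h' : ↥{u : V | u ≠ v} → Fin q}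
    (hstep : KempeStep (G.induce {u : V | u ≠ v}) h h')
    {H : V → Fin q} (hH : IsProperColoring G H)
    (hres : ∀ x : ↥{u : V | u ≠ v}, H ↑x = h x) :
    ∃ H' : V → Fin q, IsProperColoring G H' ∧ KempeEquiv G H H' ∧
      ∀ x : ↥{u : V | u ≠ v}, H' ↑x = h' x := by
  classical
  obtain ⟨a, b, hab, C, hform0⟩ := hstep
  have hform : ∀ x, h' x = kFun (G.induce {u : V | u ≠ v}) h a b C x := by
    intro x
    rw [hform0 x]
    by_cases hx : h x = a ∨ h x = b
    · by_cases hC : ((G.induce {u : V | u ≠ v}).induce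
          {x | h x = a ∨ h x = b}).connectedComponentMk ⟨x, hx⟩ = C
      · rw [kFun_pos hx hC, dif_pos hx, if_pos hC]
      · rw [kFun_neg hx hC, dif_pos hx, if_neg hC]
    · rw [kFun_not hx, dif_neg hx]
  have hstep' : KempeStep (G.induce {u : V | u ≠ v}) h h' := ⟨a, b, hab, C, hform0⟩
  by_cases hv : H v = a ∨ H v = b
  · by_cases hone : ∀ u₁ u₂ : V, (H u₁ = a ∨ H u₁ = b) → (H u₂ = a ∨ H u₂ = b) →
        G.Adj v u₁ → G.Adj v u₂ → u₁ = u₂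
    · obtain ⟨H', h1, h2, h3⟩ := direct_lift G v hab hform hH hres (fun _ => hone)
      exact ⟨H', h1, Relation.ReflTransGen.single h2, h3⟩
    · push_neg at hone
      obtain ⟨u₁, u₂, hu₁S, hu₂S, hadj₁, hadj₂, hne⟩ := hone
      have hvne₁ : H v ≠ H u₁ := hH hadj₁
      have hvne₂ : H v ≠ H u₂ := hH hadj₂
      have heq12 : H u₁ = H u₂ := by
        rcases hv with hv' | hv' <;> rcases hu₁S with e1 | e1 <;> rcases hu₂S with e2 | e2 <;>
          simp_all
      set N : Finset V := Finset.univ.filter (fun x => G.Adj v x) with hN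
      have hNcard : N.card < q := by
        have hfin : ({x | G.Adj v x} : Set V).toFinset = N := by
          ext u
          simp [hN]
        rw [Set.ncard_eq_toFinset_card', hfin] at hdeg
        exact hdeg
      have hu₁N : u₁ ∈ N := by simp [hN, hadj₁]
      have hu₂N : u₂ ∈ N := by simp [hN, hadj₂]
      have himg : N.image H ⊆ (N.erase u₂).image H := by
        intro cimg hc
        obtain ⟨x, hxN, rfl⟩ := Finset.mem_image.1 hc
        by_cases hxu : x = u₂
        · exact Finset.mem_image.2 ⟨u₁, Finset.mem_erase.2 ⟨hne, hu₁N⟩, by rw [hxu, heq12]⟩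
        · exact Finset.mem_image.2 ⟨x, Finset.mem_erase.2 ⟨hxu, hxN⟩, rfl⟩
      have hTcard : (insert (H v) (N.image H)).card < q := by
        have h1 : (N.image H).card ≤ (N.erase u₂).card :=
          le_trans (Finset.card_le_card himg) Finset.card_image_le
        have h2 : (N.erase u₂).card = N.card - 1 := Finset.card_erase_of_mem hu₂N
        have h3 : 1 ≤ N.card := Finset.card_pos.2 ⟨u₁, hu₁N⟩
        have h4 := Finset.card_insert_le (H v) (N.image H)
        omega
      obtain ⟨c, hc⟩ : ∃ c : Fin q, c ∉ insert (H v) (N.image H) := by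
        by_contra hcon
        push_neg at hcon
        have hsub : (Finset.univ : Finset (Fin q)) ⊆ insert (H v) (N.image H) :=
          fun c _ => hcon c
        have hcard2 := Finset.card_le_card hsub
        simp at hcard2
        omega
      have hcv : H v ≠ c := fun e => hc (by rw [← e]; exact Finset.mem_insert_self _ _)
      have hcN : ∀ u, G.Adj v u → H u ≠ c := by
        intro u hadj e
        exact hc (Finset.mem_insert_of_mem (Finset.mem_image.2 ⟨u, by simp [hN, hadj], e⟩))
      have hcu₁ : H u₁ ≠ c := hcN u₁ hadj₁
      have hcab : ¬(c = a ∨ c = b) := by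
        intro hcor
        rcases hv with hv' | hv' <;> rcases hu₁S with e1 | e1 <;> rcases hcor with rfl | rfl <;>
          simp_all
      set H₁ : V → Fin q := Function.update H v c with hH₁def
      have hstep₁ : KempeStep G H H₁ := kempeStep_update hH hcv hcN
      have hH₁ : IsProperColoring G H₁ := kempeStep_proper hH hstep₁
      have hres₁ : ∀ x : ↥{u : V | u ≠ v}, H₁ ↑x = h x := by
        intro x
        rw [hH₁def, Function.update_of_ne x.2]
        exact hres x
      have hv₁ : ¬(H₁ v = a ∨ H₁ v = b) := by
        rw [hH₁def, Function.update_self]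
        exact hcab
      obtain ⟨H', h1, h2, h3⟩ :=
        direct_lift G v hab hform hH₁ hres₁ (fun hcon => absurd hcon hv₁)
      exact ⟨H', h1, Relation.ReflTransGen.head hstep₁ (Relation.ReflTransGen.single h2), h3⟩
  · obtain ⟨H', h1, h2, h3⟩ := direct_lift G v hab hform hH hres (fun hcon => absurd hcon hv)
    exact ⟨H', h1, Relation.ReflTransGen.single h2, h3⟩


universe u

lemma key (n : ℕ) : ∀ (V : Type u) [Fintype V] [DecidableEq V]
    (G : SimpleGraph V) (q : ℕ),
    Fintype.card V ≤ n →
    (∀ W : Set V, W.Nonempty → ∃ u ∈ W, ({x | x ∈ W ∧ G.Adj u x} : Set V).ncard < q) →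
    ∀ f g : V → Fin q, IsProperColoring G f → IsProperColoring G g → KempeEquiv G f g := by
  induction n with
  | zero =>
      intro V instF instD G q hcard _ f g _ _
      haveI : IsEmpty V := Fintype.card_eq_zero_iff.mp (Nat.le_zero.mp hcard)
      have : f = g := funext fun x => isEmptyElim x
      rw [this]
      exact Relation.ReflTransGen.refl
  | succ n ih =>
      intro V instF instD G q hcard hdegen f g hf hg
      cases isEmpty_or_nonempty V with
      | inl he =>
          have : f = g := funext fun x => isEmptyElim x
          rw [this]
          exact Relation.ReflTransGen.refl
      | inr hne =>
          obtain ⟨v, -, hv⟩ := hdegen Set.univ Set.univ_nonempty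
          have hdeg : ({x | G.Adj v x} : Set V).ncard < q := by
            have hvv : {x | x ∈ (Set.univ : Set V) ∧ G.Adj v x} = {x | G.Adj v x} := by
              ext x; simp
            rwa [hvv] at hv
          haveI : Fintype ↥{u : V | u ≠ v} := (Set.toFinite _).fintype
          have hcard' : Fintype.card ↥{u : V | u ≠ v} ≤ n := by
            have hlt : Fintype.card ↥{u : V | u ≠ v} < Fintype.card V :=
              Fintype.card_lt_of_injective_of_notMem (b := v)
                (Subtype.val : ↥{u : V | u ≠ v} → V) Subtype.val_injective
                (by rintro ⟨⟨x, hx⟩, hx2⟩; exact hx hx2)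
            omega
          have hf' : IsProperColoring (G.induce {u : V | u ≠ v})
              (fun x : ↥{u : V | u ≠ v} => f ↑x) := fun x y hadj => hf (by simpa using hadj)
          have hg' : IsProperColoring (G.induce {u : V | u ≠ v})
              (fun x : ↥{u : V | u ≠ v} => g ↑x) := fun x y hadj => hg (by simpa using hadj)
          have hdegen' : ∀ W' : Set ↥{u : V | u ≠ v}, W'.Nonempty →
              ∃ u' ∈ W', ({x | x ∈ W' ∧ (G.induce {u : V | u ≠ v}).Adj u' x}).ncard < q := by
            intro W' hW'
            obtain ⟨u, huW, hu⟩ := hdegen (Subtype.val '' W') (hW'.image _)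
            obtain ⟨u', hu'W, rfl⟩ := huW
            refine ⟨u', hu'W, lt_of_le_of_lt ?_ hu⟩
            have hsub : Subtype.val '' {x | x ∈ W' ∧ (G.induce {u : V | u ≠ v}).Adj u' x} ⊆
                {x | x ∈ Subtype.val '' W' ∧ G.Adj ↑u' x} := by
              rintro _ ⟨x, ⟨h1, h2⟩, rfl⟩
              exact ⟨⟨x, h1, rfl⟩, by simpa using h2⟩
            calc ({x | x ∈ W' ∧ (G.induce {u : V | u ≠ v}).Adj u' x}).ncard
                = (Subtype.val '' {x | x ∈ W' ∧ (G.induce {u : V | u ≠ v}).Adj u' x}).ncard :=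
                  (Set.ncard_image_of_injective _ Subtype.val_injective).symm
              _ ≤ _ := Set.ncard_le_ncard hsub (Set.toFinite _)
          have hchain := ih ↥{u : V | u ≠ v}
            (G.induce {u : V | u ≠ v}) q hcard' hdegen'
            (fun x => f ↑x) (fun x => g ↑x) hf' hg'
          have hlift : ∀ (k : ↥{u : V | u ≠ v} → Fin q),
              Relation.ReflTransGen (KempeStep (G.induce {u : V | u ≠ v}))
                (fun x => f ↑x) k →
              IsProperColoring (G.induce {u : V | u ≠ v}) k ∧
              ∃ H : V → Fin q, IsProperColoring G H ∧ KempeEquiv G f H ∧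
                ∀ x : ↥{u : V | u ≠ v}, H ↑x = k x := by
            intro k hchain'
            induction hchain' with
            | refl => exact ⟨hf', f, hf, Relation.ReflTransGen.refl, fun _ => rfl⟩
            | tail hR hstep ihc =>
                obtain ⟨hpb, H, hHp, hHe, hHres⟩ := ihc
                obtain ⟨H', h1, h2, h3⟩ := lift_step G v hdeg hstep hHp hHres
                exact ⟨kempeStep_proper hpb hstep, H', h1, hHe.trans h2, h3⟩
          obtain ⟨-, H, hHp, hHe, hHres⟩ := hlift (fun x => g ↑x) hchain
          exact hHe.trans (kempeEquiv_of_eq_off hHp hg v (fun u hu => hHres ⟨u, hu⟩))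

lemma ncard_neighborSet {V : Type*} [Fintype V] (G : SimpleGraph V) [DecidableRel G.Adj]
    (u : V) : (G.neighborSet u).ncard = G.degree u := by
  rw [Set.ncard_eq_toFinset_card']
  rfl

end KempeAux

/-- Let `G` be a finite simple graph with maximum degree `Δ`.
If `q ≥ Δ + 1`, then any two proper `q`-colorings of `G` are Kempe equivalent.
Moreover, if `G` is connected and has a vertex of degree `< Δ`, then any two
proper `Δ`-colorings of `G` are Kempe equivalent. -/
theorem kempeEquiv_of_maxDegree {V : Type*} [Fintype V] [DecidableEq V]
    (G : SimpleGraph V) [DecidableRel G.Adj] :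
    (∀ q : ℕ, G.maxDegree + 1 ≤ q →
      ∀ f g : V → Fin q, IsProperColoring G f → IsProperColoring G g →
        KempeEquiv G f g) ∧
    (G.Connected → (∃ v : V, G.degree v < G.maxDegree) →
      ∀ f g : V → Fin G.maxDegree, IsProperColoring G f → IsProperColoring G g →
        KempeEquiv G f g) := by
  constructor
  · intro q hq f g hf hg
    refine KempeAux.key (Fintype.card V) V G q le_rfl ?_ f g hf hg
    intro W hW
    obtain ⟨u, hu⟩ := hW
    refine ⟨u, hu, ?_⟩
    have h1 : ({x | x ∈ W ∧ G.Adj u x} : Set V).ncard ≤ (G.neighborSet u).ncard :=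
      Set.ncard_le_ncard (fun x hx => hx.2) (Set.toFinite _)
    have h2 := KempeAux.ncard_neighborSet G u
    have h3 := G.degree_le_maxDegree u
    omega
  · intro hconn hlow f g hf hg
    obtain ⟨v₀, hv₀⟩ := hlow
    refine KempeAux.key (Fintype.card V) V G G.maxDegree le_rfl ?_ f g hf hg
    intro W hW
    by_contra hcon
    push_neg at hcon
    have hbound : ∀ u, ({x | x ∈ W ∧ G.Adj u x} : Set V).ncard ≤ G.degree u := by
      intro u
      have h1 : ({x | x ∈ W ∧ G.Adj u x} : Set V).ncard ≤ (G.neighborSet u).ncard :=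
        Set.ncard_le_ncard (fun x hx => hx.2) (Set.toFinite _)
      have h2 := KempeAux.ncard_neighborSet G u
      omega
    have hclosed : ∀ u ∈ W, ∀ x, G.Adj u x → x ∈ W := by
      intro u huW x hadj
      by_contra hxW
      have hss : ({x | x ∈ W ∧ G.Adj u x} : Set V) ⊂ G.neighborSet u := by
        constructor
        · exact fun y hy => hy.2
        · intro hsup
          exact hxW (hsup (show x ∈ G.neighborSet u from hadj)).1
      have h1 : ({x | x ∈ W ∧ G.Adj u x} : Set V).ncard < (G.neighborSet u).ncard :=
        Set.ncard_lt_ncard hss (Set.toFinite _)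
      have h2 := KempeAux.ncard_neighborSet G u
      have h3 := G.degree_le_maxDegree u
      have h4 := hcon u huW
      omega
    have hv₀W : v₀ ∉ W := by
      intro hmem
      have h4 := hcon v₀ hmem
      have h5 := hbound v₀
      omega
    obtain ⟨u, huW⟩ := hW
    obtain ⟨p⟩ := hconn.preconnected u v₀
    have hwalk : ∀ (x y : V) (p : G.Walk x y), x ∈ W → y ∈ W := by
      intro x y p
      induction p with
      | nil => exact id
      | cons ha p ih => intro hx; exact ih (hclosed _ hx _ ha)
    exact hv₀W (hwalk u v₀ p huW)
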